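/- If K : S¹ → ℝ³ is a continuous injective closed curve and a is a point of its image such that no line through a meets the image of K in three points with a first (i.e., there is no trisecant starting at a), then the union of all chords from a to points of K is an embedded disk with boundary K; in particular any two chords from a intersect only at a. -/

import Mathlib

open Metric Set

set_option maxHeartbeats 1600000

noncomputable def pt (u w : ℝ) : EuclideanSpace ℝ (Fin 2) := WithLp.toLp 2 ![u, w]

noncomputable def TT (x : EuclideanSpace ℝ (Fin 2)) : ℝ :=
  1/2 + Real.arctan (x 1 / (x 0 + 1)) / Real.pi

noncomputable def RR (x : EuclideanSpace ℝ (Fin 2)) : ℝ :=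
  ((x 0 + 1)^2 + (x 1)^2) / (2 * (x 0 + 1))

lemma normsq2 (x : EuclideanSpace ℝ (Fin 2)) : ‖x‖^2 = (x 0)^2 + (x 1)^2 := by
  rw [EuclideanSpace.norm_eq, Real.sq_sqrt (by positivity)]
  simp [Fin.sum_univ_two]

lemma mem_cb_iff (x : EuclideanSpace ℝ (Fin 2)) :
    x ∈ closedBall (0 : EuclideanSpace ℝ (Fin 2)) 1 ↔ (x 0)^2 + (x 1)^2 ≤ 1 := by
  rw [mem_closedBall_zero_iff, ← normsq2]
  constructor
  · intro h; nlinarith [norm_nonneg x]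
  · intro h; nlinarith [norm_nonneg x]

lemma mem_sp_iff (x : EuclideanSpace ℝ (Fin 2)) :
    x ∈ sphere (0 : EuclideanSpace ℝ (Fin 2)) 1 ↔ (x 0)^2 + (x 1)^2 = 1 := by
  rw [mem_sphere_zero_iff_norm, ← normsq2]
  constructor
  · intro h; rw [h]; norm_num
  · intro h; nlinarith [norm_nonneg x]

lemma abs_coord_le (x : EuclideanSpace ℝ (Fin 2)) (i : Fin 2) : |x i| ≤ ‖x‖ := by
  have h := normsq2 x
  have h2 : x i = x 0 ∨ x i = x 1 := by
    fin_cases i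
    · exact Or.inl rfl
    · exact Or.inr rfl
  have : (x i)^2 ≤ ‖x‖^2 := by
    rcases h2 with h2 | h2 <;> rw [h2] <;> nlinarith [sq_nonneg (x 0), sq_nonneg (x 1)]
  nlinarith [abs_nonneg (x i), norm_nonneg x, sq_abs (x i)]

lemma coe_ne_zero_of_Ioo {t : ℝ} (ht : t ∈ Ioo (0:ℝ) 1) : (t : AddCircle (1:ℝ)) ≠ 0 := by
  intro h
  rw [AddCircle.coe_eq_zero_iff_of_mem_Ico ⟨ht.1.le, ht.2⟩] at h
  exact ne_of_gt ht.1 h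

lemma coe_inj_Ioo {t t' : ℝ} (ht : t ∈ Ioo (0:ℝ) 1) (ht' : t' ∈ Ioo (0:ℝ) 1)
    (h : (t : AddCircle (1:ℝ)) = t') : t = t' := by
  rwa [AddCircle.coe_eq_coe_iff_of_mem_Ico (a := 0)
    (by simpa using Ioo_subset_Ico_self ht) (by simpa using Ioo_subset_Ico_self ht')] at h

lemma exists_coe_Ioo {s : AddCircle (1:ℝ)} (hs : s ≠ 0) :
    ∃ t ∈ Ioo (0:ℝ) 1, (t : AddCircle (1:ℝ)) = s := by
  obtain ⟨b, hb, hbs⟩ := AddCircle.eq_coe_Ico s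
  refine ⟨b, ⟨?_, hb.2⟩, hbs⟩
  rcases eq_or_lt_of_le hb.1 with h | h
  · exfalso; apply hs; rw [← hbs, ← h]; norm_cast
  · exact h

lemma key_half (S : Set (EuclideanSpace ℝ (Fin 3))) (a : EuclideanSpace ℝ (Fin 3))
    (htri : ¬ ∃ b ∈ S, ∃ c ∈ S, b ≠ a ∧ c ≠ a ∧ b ≠ c ∧ b ∈ segment ℝ a c)
    {b c : EuclideanSpace ℝ (Fin 3)} (hb : b ∈ S) (hc : c ∈ S)
    (hba : b ≠ a) (hca : c ≠ a) {r r' : ℝ} (hr : 0 < r) (hr' : 0 < r') (hle : r ≤ r')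
    (h : r • (b - a) = r' • (c - a)) : b = c := by
  by_contra hbc
  apply htri
  refine ⟨c, hc, b, hb, hca, hba, Ne.symm hbc, ?_⟩
  rw [segment_eq_image']
  refine ⟨r / r', ⟨by positivity, by rw [div_le_one hr']; exact hle⟩, ?_⟩
  have h2 : (r / r') • (b - a) = c - a := by
    rw [div_eq_inv_mul, ← smul_smul, h, smul_smul, inv_mul_cancel₀ hr'.ne', one_smul]
  show a + (r / r') • (b - a) = c
  rw [h2]; abel

lemma key (S : Set (EuclideanSpace ℝ (Fin 3))) (a : EuclideanSpace ℝ (Fin 3))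
    (htri : ¬ ∃ b ∈ S, ∃ c ∈ S, b ≠ a ∧ c ≠ a ∧ b ≠ c ∧ b ∈ segment ℝ a c)
    {b c : EuclideanSpace ℝ (Fin 3)} (hb : b ∈ S) (hc : c ∈ S)
    (hba : b ≠ a) (hca : c ≠ a) {r r' : ℝ} (hr : 0 < r) (hr' : 0 < r')
    (h : r • (b - a) = r' • (c - a)) : b = c ∧ r = r' := by
  have hbc : b = c := by
    rcases le_total r r' with hle | hle
    · exact key_half S a htri hb hc hba hca hr hr' hle h
    · exact (key_half S a htri hc hb hca hba hr' hr hle h.symm).symm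
  subst hbc
  refine ⟨rfl, ?_⟩
  have h3 : (r - r') • (b - a) = 0 := by rw [sub_smul, h, sub_self]
  rcases smul_eq_zero.mp h3 with h4 | h4
  · linarith [sub_eq_zero.mp h4]
  · exact absurd (sub_eq_zero.mp h4) hba

lemma TT_mem (x : EuclideanSpace ℝ (Fin 2)) : TT x ∈ Ioo (0:ℝ) 1 := by
  have hπ := Real.pi_pos
  have h1 := Real.neg_pi_div_two_lt_arctan (x 1 / (x 0 + 1))
  have h2 := Real.arctan_lt_pi_div_two (x 1 / (x 0 + 1))
  have e1 : Real.arctan (x 1 / (x 0 + 1)) / Real.pi < 1/2 := by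
    rw [div_lt_iff₀ hπ]; linarith
  have e2 : -(1/2) < Real.arctan (x 1 / (x 0 + 1)) / Real.pi := by
    rw [lt_div_iff₀ hπ]; linarith
  constructor <;> (unfold TT; linarith)

lemma cb_dichotomy {x : EuclideanSpace ℝ (Fin 2)}
    (hx : x ∈ closedBall (0 : EuclideanSpace ℝ (Fin 2)) 1) :
    (x 0 + 1 = 0 ∧ x 1 = 0) ∨ 0 < x 0 + 1 := by
  rw [mem_cb_iff] at hx
  rcases lt_or_ge (-1) (x 0) with h | h
  · right; linarith
  · left
    have h1 : x 0 = -1 := by nlinarith [sq_nonneg (x 1)]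
    constructor
    · linarith
    · nlinarith

lemma eq_pt_of_deg {x : EuclideanSpace ℝ (Fin 2)} (h0 : x 0 + 1 = 0) (h1 : x 1 = 0) :
    x = pt (-1) 0 := by
  ext i; fin_cases i
  · show x 0 = -1; linarith
  · show x 1 = 0; exact h1

lemma RR_pos {x : EuclideanSpace ℝ (Fin 2)} (h : 0 < x 0 + 1) : 0 < RR x := by
  unfold RR
  have : 0 < (x 0 + 1)^2 + (x 1)^2 := by positivity
  positivity

lemma RR_le_one {x : EuclideanSpace ℝ (Fin 2)}
    (hx : x ∈ closedBall (0 : EuclideanSpace ℝ (Fin 2)) 1) (h : 0 < x 0 + 1) :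
    RR x ≤ 1 := by
  rw [mem_cb_iff] at hx
  unfold RR
  rw [div_le_one (by linarith)]
  nlinarith

lemma RR_eq_one {x : EuclideanSpace ℝ (Fin 2)}
    (hx : x ∈ sphere (0 : EuclideanSpace ℝ (Fin 2)) 1) (h : 0 < x 0 + 1) :
    RR x = 1 := by
  rw [mem_sp_iff] at hx
  unfold RR
  rw [div_eq_one_iff_eq (by linarith)]
  nlinarith

lemma TR_inj {x y : EuclideanSpace ℝ (Fin 2)} (hx : 0 < x 0 + 1) (hy : 0 < y 0 + 1)
    (hT : TT x = TT y) (hR : RR x = RR y) : x = y := by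
  have hπ := Real.pi_pos
  have hm : x 1 / (x 0 + 1) = y 1 / (y 0 + 1) := by
    apply Real.arctan_injective
    have h' : Real.arctan (x 1 / (x 0 + 1)) / Real.pi
        = Real.arctan (y 1 / (y 0 + 1)) / Real.pi := by
      unfold TT at hT; linarith
    field_simp at h'
    exact h'
  set m := x 1 / (x 0 + 1) with hmdef
  have hx1 : x 1 = m * (x 0 + 1) := by rw [hmdef, div_mul_cancel₀ _ (ne_of_gt hx)]
  have hy1 : y 1 = m * (y 0 + 1) := by rw [hm]; field_simp
  have hRx : RR x = (x 0 + 1) * (1 + m^2) / 2 := by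
    unfold RR; rw [hx1]; field_simp
  have hRy : RR y = (y 0 + 1) * (1 + m^2) / 2 := by
    unfold RR; rw [hy1]; field_simp
  have h1m : (0:ℝ) < 1 + m^2 := by positivity
  have h0 : x 0 = y 0 := by
    rw [hRx, hRy] at hR
    have := mul_right_cancel₀ (ne_of_gt h1m)
      (by linarith : (x 0 + 1) * (1 + m^2) = (y 0 + 1) * (1 + m^2))
    linarith
  ext i; fin_cases i
  · exact h0
  · show x 1 = y 1; rw [hx1, hy1, h0]

lemma construct {t r : ℝ} (ht : t ∈ Ioo (0:ℝ) 1) (hr0 : 0 < r) (hr1 : r ≤ 1) :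
    ∃ x : EuclideanSpace ℝ (Fin 2), x ∈ closedBall (0 : EuclideanSpace ℝ (Fin 2)) 1 ∧
      0 < x 0 + 1 ∧ TT x = t ∧ RR x = r ∧
      (r = 1 → x ∈ sphere (0 : EuclideanSpace ℝ (Fin 2)) 1) := by
  have hπ := Real.pi_pos
  set φ := Real.pi * (t - 1/2) with hφdef
  have hφ1 : -(Real.pi/2) < φ := by rw [hφdef]; nlinarith [ht.1]
  have hφ2 : φ < Real.pi/2 := by rw [hφdef]; nlinarith [ht.2]
  set m := Real.tan φ with hmdef
  have h1m : (0:ℝ) < 1 + m^2 := by positivity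
  set u := 2*r/(1+m^2) - 1 with hudef
  set w := m * (2*r/(1+m^2)) with hwdef
  have hu1 : u + 1 = 2*r/(1+m^2) := by rw [hudef]; ring
  have hupos : 0 < u + 1 := by rw [hu1]; positivity
  have hm' : w / (u + 1) = m := by rw [hu1, hwdef]; field_simp
  refine ⟨pt u w, ?_, ?_, ?_, ?_, ?_⟩
  · rw [mem_cb_iff]
    show u^2 + w^2 ≤ 1
    have e : u^2 + w^2 = 1 - 4*r*(1-r)/(1+m^2) := by
      rw [hudef, hwdef]; field_simp; ring
    rw [e]
    have : 0 ≤ 4*r*(1-r)/(1+m^2) := div_nonneg (by nlinarith) (le_of_lt h1m)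
    linarith
  · exact hupos
  · show 1/2 + Real.arctan (w / (u + 1)) / Real.pi = t
    rw [hm', hmdef, Real.arctan_tan hφ1 hφ2, hφdef]
    field_simp
    ring
  · show ((u + 1)^2 + w^2) / (2 * (u + 1)) = r
    have hw2 : w = m * (u+1) := by rw [hu1, hwdef]
    rw [hw2, hu1]
    field_simp
  · intro hr
    rw [mem_sp_iff]
    show u^2 + w^2 = 1
    have e : u^2 + w^2 = 1 - 4*r*(1-r)/(1+m^2) := by
      rw [hudef, hwdef]; field_simp; ring
    rw [e, hr]; ring

theorem chord_disk_of_no_trisecant_from_point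
    (K : AddCircle (1 : ℝ) → EuclideanSpace ℝ (Fin 3))
    (hK : Continuous K) (hinj : Function.Injective K)
    (a : EuclideanSpace ℝ (Fin 3)) (ha : a ∈ Set.range K)
    (htri : ¬ ∃ b ∈ Set.range K, ∃ c ∈ Set.range K,
      b ≠ a ∧ c ≠ a ∧ b ≠ c ∧ b ∈ segment ℝ a c) :
    (∃ f : EuclideanSpace ℝ (Fin 2) → EuclideanSpace ℝ (Fin 3),
      ContinuousOn f (closedBall 0 1) ∧ Set.InjOn f (closedBall 0 1) ∧
      f '' (closedBall 0 1) = (⋃ b ∈ Set.range K, segment ℝ a b) ∧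
      f '' (sphere 0 1) = Set.range K) ∧
    (∀ b ∈ Set.range K, ∀ c ∈ Set.range K, b ≠ c →
      segment ℝ a b ∩ segment ℝ a c = {a}) := by
  obtain ⟨θ₀, hθ₀⟩ := ha
  have hπ := Real.pi_pos
  -- Part 2
  have part2 : ∀ b ∈ Set.range K, ∀ c ∈ Set.range K, b ≠ c →
      segment ℝ a b ∩ segment ℝ a c = {a} := by
    intro b hb c hc hbc
    apply Set.eq_singleton_iff_unique_mem.mpr
    refine ⟨⟨left_mem_segment ℝ a b, left_mem_segment ℝ a c⟩, ?_⟩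
    rintro x ⟨hxb, hxc⟩
    rw [segment_eq_image'] at hxb hxc
    obtain ⟨r, ⟨hr0, hr1⟩, hxr⟩ := hxb
    obtain ⟨r', ⟨hr'0, hr'1⟩, hxr'⟩ := hxc
    replace hxr : a + r • (b - a) = x := hxr
    replace hxr' : a + r' • (c - a) = x := hxr'
    by_contra hxa
    have e1 : r • (b - a) = x - a := by rw [← hxr]; abel
    have e2 : r' • (c - a) = x - a := by rw [← hxr']; abel
    have hxa' : x - a ≠ 0 := sub_ne_zero.mpr hxa
    have hrpos : 0 < r := by
      rcases eq_or_lt_of_le hr0 with h | h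
      · exfalso; apply hxa'; rw [← e1, ← h, zero_smul]
      · exact h
    have hr'pos : 0 < r' := by
      rcases eq_or_lt_of_le hr'0 with h | h
      · exfalso; apply hxa'; rw [← e2, ← h, zero_smul]
      · exact h
    have hba : b ≠ a := by
      intro h; apply hxa'; rw [← e1, h, sub_self, smul_zero]
    have hca : c ≠ a := by
      intro h; apply hxa'; rw [← e2, h, sub_self, smul_zero]
    exact hbc (key (Set.range K) a htri hb hc hba hca hrpos hr'pos (e1.trans e2.symm)).1
  -- the disk map
  set p₀ : EuclideanSpace ℝ (Fin 2) := pt (-1) 0 with hp₀def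
  have hp₀0 : p₀ 0 = -1 := rfl
  have hp₀1 : p₀ 1 = 0 := rfl
  set f : EuclideanSpace ℝ (Fin 2) → EuclideanSpace ℝ (Fin 3) :=
    fun x => a + RR x • (K (θ₀ + ((TT x : ℝ) : AddCircle (1:ℝ))) - a) with hfdef
  have hfx : ∀ x, f x = a + RR x • (K (θ₀ + ((TT x : ℝ) : AddCircle (1:ℝ))) - a) :=
    fun _ => rfl
  have hRp₀ : RR p₀ = 0 := by unfold RR; rw [hp₀0, hp₀1]; norm_num
  have hfp₀ : f p₀ = a := by rw [hfx, hRp₀, zero_smul, add_zero]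
  have hp₀cb : p₀ ∈ closedBall (0 : EuclideanSpace ℝ (Fin 2)) 1 := by
    rw [mem_cb_iff, hp₀0, hp₀1]; norm_num
  have hp₀sp : p₀ ∈ sphere (0 : EuclideanSpace ℝ (Fin 2)) 1 := by
    rw [mem_sp_iff, hp₀0, hp₀1]; norm_num
  have hKne : ∀ t : ℝ, t ∈ Ioo (0:ℝ) 1 → K (θ₀ + (t : AddCircle (1:ℝ))) ≠ a := by
    intro t ht h
    have h2 : θ₀ + (t : AddCircle (1:ℝ)) = θ₀ := hinj (by rw [h, hθ₀])
    rw [add_eq_left] at h2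
    exact coe_ne_zero_of_Ioo ht h2
  -- injectivity
  have hInj : Set.InjOn f (closedBall 0 1) := by
    intro x hx y hy hfe
    rcases cb_dichotomy hx with ⟨hx0, hx1⟩ | hx0 <;>
      rcases cb_dichotomy hy with ⟨hy0, hy1⟩ | hy0
    · rw [eq_pt_of_deg hx0 hx1, eq_pt_of_deg hy0 hy1]
    · exfalso
      rw [eq_pt_of_deg hx0 hx1, hfp₀, hfx] at hfe
      have := (left_eq_add.mp hfe)
      rcases smul_eq_zero.mp this with h | h
      · exact (ne_of_gt (RR_pos hy0)) h
      · exact hKne _ (TT_mem y) (sub_eq_zero.mp h)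
    · exfalso
      rw [eq_pt_of_deg hy0 hy1, hfp₀, hfx] at hfe
      have := (left_eq_add.mp hfe.symm)
      rcases smul_eq_zero.mp this with h | h
      · exact (ne_of_gt (RR_pos hx0)) h
      · exact hKne _ (TT_mem x) (sub_eq_zero.mp h)
    · rw [hfx, hfx] at hfe
      have heq : RR x • (K (θ₀ + ((TT x : ℝ) : AddCircle (1:ℝ))) - a)
          = RR y • (K (θ₀ + ((TT y : ℝ) : AddCircle (1:ℝ))) - a) := add_left_cancel hfe
      obtain ⟨hbc, hrr⟩ := key (Set.range K) a htri (mem_range_self _) (mem_range_self _)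
        (hKne _ (TT_mem x)) (hKne _ (TT_mem y)) (RR_pos hx0) (RR_pos hy0) heq
      have hTT : TT x = TT y :=
        coe_inj_Ioo (TT_mem x) (TT_mem y) (add_left_cancel (hinj hbc))
      exact TR_inj hx0 hy0 hTT hrr
  -- image of the closed ball
  have himg1 : f '' (closedBall 0 1) = ⋃ b ∈ Set.range K, segment ℝ a b := by
    apply Set.Subset.antisymm
    · rintro _ ⟨x, hx, rfl⟩
      rcases cb_dichotomy hx with ⟨hx0, hx1⟩ | hx0
      · rw [eq_pt_of_deg hx0 hx1, hfp₀]
        exact mem_biUnion ⟨θ₀, hθ₀⟩ (left_mem_segment ℝ a a)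
      · apply mem_biUnion (mem_range_self (θ₀ + ((TT x : ℝ) : AddCircle (1:ℝ))))
        rw [segment_eq_image']
        exact ⟨RR x, ⟨(RR_pos hx0).le, RR_le_one hx hx0⟩, (hfx x).symm⟩
    · rintro p hp
      rw [mem_iUnion₂] at hp
      obtain ⟨b, hb, hpb⟩ := hp
      rw [segment_eq_image'] at hpb
      obtain ⟨r, ⟨hr0, hr1⟩, hpr⟩ := hpb
      replace hpr : a + r • (b - a) = p := hpr
      subst hpr
      by_cases hpa : a + r • (b - a) = a
      · exact ⟨p₀, hp₀cb, by rw [hfp₀, hpa]⟩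
      · have hrpos : 0 < r := by
          rcases eq_or_lt_of_le hr0 with h | h
          · exfalso; apply hpa; rw [← h, zero_smul, add_zero]
          · exact h
        have hba : b ≠ a := by
          intro h; apply hpa; rw [h, sub_self, smul_zero, add_zero]
        obtain ⟨s, hs⟩ := hb
        have hsθ : s ≠ θ₀ := by
          intro h; apply hba; rw [← hs, h, hθ₀]
        obtain ⟨t, ht, hts⟩ := exists_coe_Ioo (sub_ne_zero.mpr hsθ)
        obtain ⟨x, hxcb, hx0, hxT, hxR, -⟩ := construct ht hrpos hr1
        refine ⟨x, hxcb, ?_⟩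
        rw [hfx, hxT, hxR, hts]
        have : θ₀ + (s - θ₀) = s := by abel
        rw [this, hs]
    -- image of the sphere
  have himg2 : f '' (sphere 0 1) = Set.range K := by
    apply Set.Subset.antisymm
    · rintro _ ⟨x, hx, rfl⟩
      rcases cb_dichotomy (sphere_subset_closedBall hx) with ⟨hx0, hx1⟩ | hx0
      · rw [eq_pt_of_deg hx0 hx1, hfp₀]; exact ⟨θ₀, hθ₀⟩
      · rw [hfx, RR_eq_one hx hx0, one_smul]
        have : a + (K (θ₀ + ((TT x : ℝ) : AddCircle (1:ℝ))) - a)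
            = K (θ₀ + ((TT x : ℝ) : AddCircle (1:ℝ))) := by abel
        rw [this]
        exact mem_range_self _
    · rintro _ ⟨s, rfl⟩
      by_cases hsθ : s = θ₀
      · exact ⟨p₀, hp₀sp, by rw [hfp₀, hsθ, hθ₀]⟩
      · obtain ⟨t, ht, hts⟩ := exists_coe_Ioo (sub_ne_zero.mpr hsθ)
        obtain ⟨x, -, hx0, hxT, hxR, hxsp⟩ := construct ht zero_lt_one le_rfl
        refine ⟨x, hxsp rfl, ?_⟩
        rw [hfx, hxT, hxR, one_smul, hts]
        have h2 : θ₀ + (s - θ₀) = s := by abel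
        rw [h2]
        abel
  -- continuity
  have hcont : ContinuousOn f (closedBall 0 1) := by
    have hc0 : Continuous fun z : EuclideanSpace ℝ (Fin 2) => z 0 :=
      (EuclideanSpace.proj (0 : Fin 2) : EuclideanSpace ℝ (Fin 2) →L[ℝ] ℝ).continuous
    have hc1 : Continuous fun z : EuclideanSpace ℝ (Fin 2) => z 1 :=
      (EuclideanSpace.proj (1 : Fin 2) : EuclideanSpace ℝ (Fin 2) →L[ℝ] ℝ).continuous
    have hg₁ : Continuous fun t : ℝ => K (θ₀ + (t : AddCircle (1:ℝ))) :=
      hK.comp (continuous_const.add (AddCircle.continuous_mk' 1))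
    have hg₁0 : K (θ₀ + (((0:ℝ)) : AddCircle (1:ℝ))) = a := by
      have : (((0:ℝ)) : AddCircle (1:ℝ)) = 0 := by norm_cast
      rw [this, add_zero, hθ₀]
    have hg₁1 : K (θ₀ + (((1:ℝ)) : AddCircle (1:ℝ))) = a := by
      rw [AddCircle.coe_period, add_zero, hθ₀]
    intro x hx
    rcases cb_dichotomy hx with ⟨hx0, hx1⟩ | hx0
    · -- the bad point
      have hxp : x = p₀ := eq_pt_of_deg hx0 hx1
      subst hxp
      rw [Metric.continuousWithinAt_iff]
      intro ε hε
      -- global bound on chord lengths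
      obtain ⟨s₀, -, hs₀⟩ := isCompact_univ.exists_isMaxOn (⟨(0 : AddCircle (1:ℝ)), trivial⟩)
        (((continuous_norm.comp (hK.sub (continuous_const (y := a))))).continuousOn)
      set C := ‖K s₀ - a‖ + 1 with hCdef
      have hCpos : 0 < C := by positivity
      have hC : ∀ s, ‖K s - a‖ ≤ C := by
        intro s
        have h6 : ‖K s - a‖ ≤ ‖K s₀ - a‖ := hs₀ (mem_univ s)
        rw [hCdef]
        linarith
      obtain ⟨η₀, hη₀pos, hη₀⟩ := Metric.continuousAt_iff.mp (hg₁.continuousAt (x := 0)) ε hε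
      obtain ⟨η₁, hη₁pos, hη₁⟩ := Metric.continuousAt_iff.mp (hg₁.continuousAt (x := 1)) ε hε
      set η := min (min η₀ η₁) (1/2) with hηdef
      have hηpos : 0 < η := by
        apply lt_min (lt_min hη₀pos hη₁pos); norm_num
      have hηhalf : η ≤ 1/2 := min_le_right _ _
      set M := Real.tan (Real.pi/2 - η*Real.pi) with hMdef
      have harc : Real.arctan M = Real.pi/2 - η*Real.pi := by
        rw [hMdef]
        apply Real.arctan_tan
        · nlinarith
        · nlinarith
      have h1M : (0:ℝ) < 1 + M^2 := by positivity
      set δ := 2*ε/((1+M^2)*C) with hδdef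
      have hδpos : 0 < δ := by positivity
      refine ⟨δ, hδpos, ?_⟩
      intro y hy hyd
      rcases cb_dichotomy hy with ⟨hy0, hy1⟩ | hy0
      · rw [eq_pt_of_deg hy0 hy1, hfp₀]
        simpa using hε
      · rw [hfp₀, hfx]
        have hTy := TT_mem y
        have hRypos := RR_pos hy0
        have hdisteq : dist (a + RR y • (K (θ₀ + ((TT y : ℝ) : AddCircle (1:ℝ))) - a)) a
            = RR y * ‖K (θ₀ + ((TT y : ℝ) : AddCircle (1:ℝ))) - a‖ := by
          rw [dist_eq_norm, add_sub_cancel_left, norm_smul, Real.norm_eq_abs,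
            abs_of_pos hRypos]
        rw [hdisteq]
        set m := y 1 / (y 0 + 1) with hmdef
        rcases le_or_gt |m| M with hm | hm
        · -- r is small
          have hmM : m^2 ≤ M^2 := by nlinarith [abs_nonneg m, sq_abs m]
          have hy1m : y 1 = m * (y 0 + 1) := by rw [hmdef]; field_simp
          have hyd' : y 0 + 1 < δ := by
            have h2 : |(y - p₀) 0| ≤ ‖y - p₀‖ := abs_coord_le _ 0
            have h3 : (y - p₀) 0 = y 0 + 1 := by
              show y 0 - p₀ 0 = y 0 + 1
              rw [hp₀0]; ring
            rw [h3] at h2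
            have h4 : ‖y - p₀‖ = dist y p₀ := (dist_eq_norm y p₀).symm
            calc y 0 + 1 ≤ |y 0 + 1| := le_abs_self _
              _ ≤ ‖y - p₀‖ := h2
              _ = dist y p₀ := h4
              _ < δ := hyd
          have hy1sq : y 1^2 ≤ M^2 * (y 0 + 1)^2 := by
            rw [hy1m, mul_pow]
            exact mul_le_mul_of_nonneg_right hmM (sq_nonneg _)
          have hRy : RR y ≤ (y 0 + 1) * (1 + M^2) / 2 := by
            unfold RR
            rw [div_le_div_iff₀ (by linarith) (by norm_num)]
            nlinarith [sq_nonneg (y 0 + 1)]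
          calc RR y * ‖K (θ₀ + ((TT y : ℝ) : AddCircle (1:ℝ))) - a‖
              ≤ RR y * C := by
                apply mul_le_mul_of_nonneg_left (hC _) hRypos.le
            _ ≤ ((y 0 + 1) * (1 + M^2) / 2) * C := by
                apply mul_le_mul_of_nonneg_right hRy hCpos.le
            _ < (δ * (1 + M^2) / 2) * C := by
                have h5 : (0:ℝ) < (1 + M^2) / 2 * C := by positivity
                nlinarith [mul_pos (sub_pos.mpr hyd') h5]
            _ = ε := by
                rw [hδdef]; field_simp
        · -- TT y is near 0 or 1
          have harcm : Real.pi/2 - η*Real.pi < Real.arctan |m| := by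
            rw [← harc]; exact Real.arctan_strictMono hm
          have habs : |Real.arctan m| = Real.arctan |m| := by
            rcases le_total 0 m with h | h
            · rw [abs_of_nonneg h, abs_of_nonneg
                (by rw [← Real.arctan_zero]; exact Real.arctan_strictMono.monotone h)]
            · rw [abs_of_nonpos h, abs_of_nonpos
                (by rw [← Real.arctan_zero]; exact Real.arctan_strictMono.monotone h)]
              exact (Real.arctan_neg m).symm
          have hTform : TT y - 1/2 = Real.arctan m / Real.pi := by
            unfold TT; rw [← hmdef]; ring
          have hTbig : 1/2 - η < |TT y - 1/2| := by
            rw [hTform, abs_div, abs_of_pos hπ, habs, lt_div_iff₀ hπ]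
            nlinarith
          have hcases : TT y < η ∨ 1 - η < TT y := by
            rcases abs_cases (TT y - 1/2) with ⟨he, -⟩ | ⟨he, -⟩ <;> rw [he] at hTbig
            · right; linarith
            · left; linarith
          have hRy1 := RR_le_one hy hy0
          have hnorm : ‖K (θ₀ + ((TT y : ℝ) : AddCircle (1:ℝ))) - a‖ < ε := by
            rcases hcases with hc | hc
            · have hd : dist (TT y) 0 < η₀ := by
                rw [Real.dist_eq, sub_zero, abs_of_pos hTy.1]
                calc TT y < η := hc
                  _ ≤ η₀ := le_trans (min_le_left _ _) (min_le_left _ _)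
              have := hη₀ hd
              rw [dist_eq_norm, hg₁0] at this
              exact this
            · have hd : dist (TT y) 1 < η₁ := by
                rw [Real.dist_eq, abs_of_nonpos (by linarith [hTy.2])]
                have : η ≤ η₁ := le_trans (min_le_left _ _) (min_le_right _ _)
                linarith
              have := hη₁ hd
              rw [dist_eq_norm, hg₁1] at this
              exact this
          calc RR y * ‖K (θ₀ + ((TT y : ℝ) : AddCircle (1:ℝ))) - a‖
              ≤ ‖K (θ₀ + ((TT y : ℝ) : AddCircle (1:ℝ))) - a‖ :=
                mul_le_of_le_one_left (norm_nonneg _) hRy1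
            _ < ε := hnorm
    · -- good points : plain continuity
      apply ContinuousAt.continuousWithinAt
      have hden : ContinuousAt (fun z : EuclideanSpace ℝ (Fin 2) => z 0 + 1) x :=
        (hc0.continuousAt).add continuousAt_const
      have hdenne : x 0 + 1 ≠ 0 := ne_of_gt hx0
      have hmc : ContinuousAt (fun z : EuclideanSpace ℝ (Fin 2) => z 1 / (z 0 + 1)) x :=
        ContinuousAt.div (hc1.continuousAt) hden hdenne
      have hTc : ContinuousAt TT x := by
        unfold TT
        exact continuousAt_const.add ((Real.continuous_arctan.continuousAt.comp hmc).div
          continuousAt_const (ne_of_gt hπ))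
      have hRc : ContinuousAt RR x := by
        unfold RR
        apply ContinuousAt.div
        · exact (hden.pow 2).add ((hc1.continuousAt).pow 2)
        · exact continuousAt_const.mul hden
        · simp only [ne_eq, mul_eq_zero]
          push_neg
          exact ⟨by norm_num, hdenne⟩
      have hKc : ContinuousAt
          (fun z : EuclideanSpace ℝ (Fin 2) =>
            K (θ₀ + ((TT z : ℝ) : AddCircle (1:ℝ))) - a) x := by
        exact ((hg₁.continuousAt).comp hTc).sub continuousAt_const
      rw [hfdef]
      exact continuousAt_const.add (hRc.smul hKc)
  exact ⟨⟨f, hcont, hInj, himg1, himg2⟩, part2⟩
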